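/- If v is an element of a real inner product space V and x ∈ X ⊂ V satisfies that the pairing of v with x1 ⊗ ... ⊗ x̂i ⊗ ... ⊗ xp is a scalar multiple of xi for each i (one-dimensional alignment condition), then some scalar multiple of x = x1 ⊗ ... ⊗ xp is a critical point of d_v on the manifold of nonzero rank-one tensors. -/

import Mathlib

open BigOperators RealInnerProductSpace Finset

noncomputable section

/-- The rank-one tensor `x₁ ⊗ ⋯ ⊗ x_p`, viewed as a multi-indexed array. -/
def rk1 {p : ℕ} (n : Fin p → ℕ) (x : ∀ i, EuclideanSpace ℝ (Fin (n i))) :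
    EuclideanSpace ℝ (∀ i, Fin (n i)) :=
  WithLp.toLp 2 (fun α => ∏ i, x i (α i))

/-- The contraction `⟨v | x₁ ⊗ ⋯ x̂ᵢ ⋯ ⊗ x_p⟩ ∈ Vᵢ`. -/
def contr {p : ℕ} (n : Fin p → ℕ) (v : EuclideanSpace ℝ (∀ i, Fin (n i)))
    (x : ∀ i, EuclideanSpace ℝ (Fin (n i))) (i : Fin p) :
    EuclideanSpace ℝ (Fin (n i)) :=
  WithLp.toLp 2 (fun a => ∑ α : ∀ j, Fin (n j),
    if α i = a then v α * ∏ j ∈ univ.erase i, x j (α j) else 0)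

/-- If for each `i` the contraction of `v` with `x₁ ⊗ ⋯ x̂ᵢ ⋯ ⊗ x_p` is a scalar multiple
of `xᵢ`, then some scalar multiple of `x₁ ⊗ ⋯ ⊗ x_p` is a critical point of `d_v`, i.e.
`v - s • (x₁ ⊗ ⋯ ⊗ x_p)` is orthogonal to the tangent space of the manifold of nonzero
rank-one tensors (spanned by the tensors with one factor replaced). -/
theorem scalar_multiple_critical {p : ℕ} (n : Fin p → ℕ)
    (v : EuclideanSpace ℝ (∀ i, Fin (n i)))
    (x : ∀ i, EuclideanSpace ℝ (Fin (n i))) (hx : ∀ i, x i ≠ 0)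
    (halign : ∀ i, ∃ c : ℝ, contr n v x i = c • x i) :
    ∃ s : ℝ, ∀ (i : Fin p) (y : EuclideanSpace ℝ (Fin (n i))),
      ⟪v - s • rk1 n x, rk1 n (Function.update x i y)⟫ = 0 := by
  classical
  choose c hc using halign
  have hinner : ∀ (u w : EuclideanSpace ℝ (∀ i, Fin (n i))),
      ⟪u, w⟫ = ∑ α, u α * w α := fun u w => by
    simp [PiLp.inner_apply, RCLike.inner_apply, mul_comm]
  -- squared norms of the factors
  set N : Fin p → ℝ := fun i => ∑ a, x i a * x i a with hN
  have hNpos : ∀ i, 0 < N i := by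
    intro i
    obtain ⟨a, ha⟩ : ∃ a, x i a ≠ 0 := by
      by_contra h
      push_neg at h
      exact hx i (PiLp.ext fun a => by simpa using h a)
    exact Finset.sum_pos' (fun b _ => mul_self_nonneg _)
      ⟨a, mem_univ a, mul_self_pos.2 ha⟩
  -- pairing of v with rank-one tensor having i-th slot replaced by y
  have key1 : ∀ (i : Fin p) (y : EuclideanSpace ℝ (Fin (n i))),
      ⟪v, rk1 n (Function.update x i y)⟫ = c i * ∑ a, x i a * y a := by
    intro i y
    rw [hinner]
    have step : ∀ α : ∀ j, Fin (n j),
        v α * ∏ j, (Function.update x i y) j (α j)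
          = (v α * ∏ j ∈ univ.erase i, x j (α j)) * y (α i) := by
      intro α
      rw [← Finset.mul_prod_erase (univ : Finset (Fin p)) _ (mem_univ i)]
      have h1 : (Function.update x i y) i (α i) = y (α i) := by
        simp
      have h2 : ∏ j ∈ univ.erase i, (Function.update x i y) j (α j)
          = ∏ j ∈ univ.erase i, x j (α j) := by
        refine Finset.prod_congr rfl fun j hj => ?_
        rw [Function.update_of_ne (Finset.mem_erase.1 hj).1]
      rw [h1, h2]; ring
    show ∑ α, v α * ∏ j, (Function.update x i y) j (α j) = _
    calc ∑ α, v α * ∏ j, (Function.update x i y) j (α j)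
        = ∑ α : ∀ j, Fin (n j), ∑ a, (if α i = a then v α * ∏ j ∈ univ.erase i, x j (α j) else 0) * y a := by
          refine Finset.sum_congr rfl fun α _ => ?_
          rw [step α]
          simp [ite_mul]
      _ = ∑ a, (contr n v x i a) * y a := by
          rw [Finset.sum_comm]
          refine Finset.sum_congr rfl fun a _ => ?_
          show _ = (∑ α : ∀ j, Fin (n j), if α i = a then v α * ∏ j ∈ univ.erase i, x j (α j) else 0) * y a
          rw [Finset.sum_mul]
      _ = c i * ∑ a, x i a * y a := by
          rw [hc i, Finset.mul_sum]
          refine Finset.sum_congr rfl fun a _ => ?_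
          simp [mul_comm, mul_assoc, mul_left_comm]
  -- pairing of two rank-one tensors
  have key2 : ∀ (z : ∀ i, EuclideanSpace ℝ (Fin (n i))),
      ⟪rk1 n x, rk1 n z⟫ = ∏ i, ∑ a, x i a * z i a := by
    intro z
    rw [hinner]
    rw [Finset.prod_univ_sum]
    rw [Fintype.piFinset_univ]
    refine Finset.sum_congr rfl fun α _ => ?_
    show (∏ i, x i (α i)) * (∏ i, z i (α i)) = _
    exact (Finset.prod_mul_distrib).symm
  -- the scalar
  set t : ℝ := ⟪v, rk1 n x⟫ with ht
  refine ⟨t / ∏ j, N j, ?_⟩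
  intro i y
  have htc : t = c i * N i := by
    have := key1 i (x i)
    rwa [Function.update_eq_self] at this
  have hPsplit : ∏ j, N j = N i * ∏ j ∈ univ.erase i, N j :=
    (Finset.mul_prod_erase univ N (mem_univ i)).symm
  have hs : (t / ∏ j, N j) * ∏ j ∈ univ.erase i, N j = c i := by
    rw [htc, hPsplit]
    have h1 : N i ≠ 0 := (hNpos i).ne'
    have h2 : ∏ j ∈ univ.erase i, N j ≠ 0 := by
      refine Finset.prod_ne_zero_iff.2 fun j _ => (hNpos j).ne'
    field_simp
  rw [inner_sub_left, real_inner_smul_left, key1, key2]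
  have hprod : ∏ j, ∑ a, x j a * (Function.update x i y) j a
      = (∑ a, x i a * y a) * ∏ j ∈ univ.erase i, N j := by
    rw [← Finset.mul_prod_erase (univ : Finset (Fin p)) _ (mem_univ i)]
    congr 1
    · simp
    · refine Finset.prod_congr rfl fun j hj => ?_
      rw [Function.update_of_ne (Finset.mem_erase.1 hj).1]
  rw [hprod]
  rw [← hs]
  ring
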